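/- Let φ, α : ℂ → ℂ be entire functions, let m ∈ ℕ, and let Q be a polynomial in m+1 variables over ℂ. Then the following are equivalent: (i) for every open real interval I and every solution x : I → ℂ of the second-order ODE x''(t) = −φ'(x(t)), the function t ↦ Q(a(t), a'(t), …, a⁽ᵐ⁾(t)) vanishes identically on I, where a(t) = α(x(t)); (ii) the function (x,y) ↦ Q(A₀(x,y), A₁(x,y), …, A_m(x,y)) vanishes identically on ℂ². -/

import Mathlib

open Set

private lemma deriv_fst_eq' {f : ℂ × ℂ → ℂ} {x y : ℂ} (hf : DifferentiableAt ℂ f (x, y)) :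
    deriv (fun s => f (s, y)) x = fderiv ℂ f (x, y) (1, 0) := by
  have h2 : HasDerivAt (fun s : ℂ => (s, y)) ((1 : ℂ), (0 : ℂ)) x :=
    (hasDerivAt_id x).prodMk (hasDerivAt_const x y)
  exact (hf.hasFDerivAt.comp_hasDerivAt x h2).deriv

private lemma deriv_snd_eq' {f : ℂ × ℂ → ℂ} {x y : ℂ} (hf : DifferentiableAt ℂ f (x, y)) :
    deriv (fun s => f (x, s)) y = fderiv ℂ f (x, y) (0, 1) := by
  have h2 : HasDerivAt (fun s : ℂ => (x, s)) ((0 : ℂ), (1 : ℂ)) y :=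
    (hasDerivAt_const y x).prodMk (hasDerivAt_id y)
  exact (hf.hasFDerivAt.comp_hasDerivAt y h2).deriv

private lemma A_analytic (φ α : ℂ → ℂ) (hφ : Differentiable ℂ φ) (hα : Differentiable ℂ α)
    (A : ℕ → ℂ × ℂ → ℂ)
    (hA0 : ∀ x y : ℂ, A 0 (x, y) = α x)
    (hArec : ∀ (n : ℕ) (x y : ℂ),
      A (n + 1) (x, y) =
        y * deriv (fun s => A n (s, y)) x - deriv φ x * deriv (fun s => A n (x, s)) y) :
    ∀ n, ∀ p : ℂ × ℂ, AnalyticAt ℂ (A n) p := by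
  have hφ2 : AnalyticOnNhd ℂ φ Set.univ := fun z _ => hφ.analyticAt z
  have hφ' : Differentiable ℂ (deriv φ) := fun z => ((hφ2.deriv) z trivial).differentiableAt
  intro n
  induction n with
  | zero =>
    intro p
    have : A 0 = fun p : ℂ × ℂ => α p.1 := by
      funext q
      rw [← hA0 q.1 q.2]
    rw [this]
    exact (hα.analyticAt p.1).comp analyticAt_fst
  | succ n ih =>
    have key : A (n + 1) = fun p : ℂ × ℂ =>
        p.2 * fderiv ℂ (A n) p (1, 0) - deriv φ p.1 * fderiv ℂ (A n) p (0, 1) := by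
      funext q
      obtain ⟨x, y⟩ := q
      rw [hArec n x y, deriv_fst_eq' (ih (x, y)).differentiableAt,
        deriv_snd_eq' (ih (x, y)).differentiableAt]
    intro p
    rw [key]
    have hfd : AnalyticAt ℂ (fderiv ℂ (A n)) p := (ih p).fderiv
    have h1 : AnalyticAt ℂ (fun q : ℂ × ℂ => fderiv ℂ (A n) q (1, 0)) p :=
      ((ContinuousLinearMap.apply ℂ ℂ ((1 : ℂ), (0 : ℂ))).analyticAt _).comp hfd
    have h2 : AnalyticAt ℂ (fun q : ℂ × ℂ => fderiv ℂ (A n) q (0, 1)) p :=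
      ((ContinuousLinearMap.apply ℂ ℂ ((0 : ℂ), (1 : ℂ))).analyticAt _).comp hfd
    exact (analyticAt_snd.mul h1).sub
      (((hφ'.analyticAt p.1).comp analyticAt_fst).mul h2)

/-- Chain rule: along a solution, `t ↦ A n (x t, v t)` has derivative `A (n+1) (x t, v t)`. -/
private lemma A_chain (φ : ℂ → ℂ)
    (A : ℕ → ℂ × ℂ → ℂ)
    (hAn : ∀ n, ∀ p : ℂ × ℂ, AnalyticAt ℂ (A n) p)
    (hArec : ∀ (n : ℕ) (x y : ℂ),
      A (n + 1) (x, y) =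
        y * deriv (fun s => A n (s, y)) x - deriv φ x * deriv (fun s => A n (x, s)) y)
    (n : ℕ) (x v : ℝ → ℂ) (t : ℝ)
    (hx : HasDerivAt x (v t) t) (hv : HasDerivAt v (-(deriv φ (x t))) t) :
    HasDerivAt (fun s => A n (x s, v s)) (A (n + 1) (x t, v t)) t := by
  have hdiff : DifferentiableAt ℂ (A n) (x t, v t) := (hAn n _).differentiableAt
  have hf : HasFDerivAt (A n) (fderiv ℂ (A n) (x t, v t)) (x t, v t) := hdiff.hasFDerivAt
  have hc : HasDerivAt (fun s => (x s, v s)) (v t, -(deriv φ (x t))) t := hx.prodMk hv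
  have h := (hf.restrictScalars ℝ).comp_hasDerivAt t hc
  convert h using 1
  all_goals try rfl
  have hL : ∀ a b : ℂ, fderiv ℂ (A n) (x t, v t) (a, b)
      = a * fderiv ℂ (A n) (x t, v t) (1, 0) + b * fderiv ℂ (A n) (x t, v t) (0, 1) := by
    intro a b
    have : (a, b) = a • ((1 : ℂ), (0 : ℂ)) + b • ((0 : ℂ), (1 : ℂ)) := by
      simp [Prod.ext_iff]
    rw [this, map_add, map_smul, map_smul, smul_eq_mul, smul_eq_mul]
  rw [hArec n (x t) (v t), deriv_fst_eq' hdiff, deriv_snd_eq' hdiff]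
  simp only [ContinuousLinearMap.coe_restrictScalars', hL (v t) (-(deriv φ (x t)))]
  ring

/-- Along a solution, iterated derivatives of `α ∘ x` coincide with the Lie derivatives. -/
private lemma A_iter (φ α : ℂ → ℂ)
    (A : ℕ → ℂ × ℂ → ℂ)
    (hA0 : ∀ x y : ℂ, A 0 (x, y) = α x)
    (hAn : ∀ n, ∀ p : ℂ × ℂ, AnalyticAt ℂ (A n) p)
    (hArec : ∀ (n : ℕ) (x y : ℂ),
      A (n + 1) (x, y) =
        y * deriv (fun s => A n (s, y)) x - deriv φ x * deriv (fun s => A n (x, s)) y)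
    (I : Set ℝ) (hI : IsOpen I) (x v : ℝ → ℂ)
    (hx : ∀ t ∈ I, HasDerivAt x (v t) t)
    (hv : ∀ t ∈ I, HasDerivAt v (-(deriv φ (x t))) t)
    (n : ℕ) : ∀ t ∈ I, iteratedDeriv n (fun s => α (x s)) t = A n (x t, v t) := by
  induction n with
  | zero =>
    intro t ht
    simp [iteratedDeriv_zero, hA0]
  | succ n ih =>
    intro t ht
    rw [iteratedDeriv_succ]
    have heq : iteratedDeriv n (fun s => α (x s)) =ᶠ[nhds t] fun s => A n (x s, v s) := by
      filter_upwards [hI.mem_nhds ht] with s hs using ih s hs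
    rw [heq.deriv_eq]
    exact (A_chain φ A hAn hArec n x v t (hx t ht) (hv t ht)).deriv

/-- For entire `φ, α : ℂ → ℂ`, with `A n = X_h^n α` the iterated Lie
derivatives along `X_h = y ∂/∂x − φ'(x) ∂/∂y`, and `Q` a polynomial in `m+1` variables,
the following are equivalent:
(i) for every open real interval `I` and every solution `x : I → ℂ` of `x'' = −φ'(x)`,
the function `t ↦ Q(a(t), a'(t), …, a⁽ᵐ⁾(t))`, where `a(t) = α(x(t))`, vanishes on `I`;
(ii) `(x,y) ↦ Q(A₀(x,y), …, A_m(x,y))` vanishes identically on `ℂ²`. -/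
theorem statement2
    (φ α : ℂ → ℂ) (hφ : Differentiable ℂ φ) (hα : Differentiable ℂ α)
    (A : ℕ → ℂ × ℂ → ℂ)
    (hA0 : ∀ x y : ℂ, A 0 (x, y) = α x)
    (hArec : ∀ (n : ℕ) (x y : ℂ),
      A (n + 1) (x, y) =
        y * deriv (fun s => A n (s, y)) x - deriv φ x * deriv (fun s => A n (x, s)) y)
    (m : ℕ) (Q : MvPolynomial (Fin (m + 1)) ℂ) :
    (∀ I : Set ℝ, IsOpen I → I.OrdConnected →
        ∀ x v : ℝ → ℂ,
          (∀ t ∈ I, HasDerivAt x (v t) t) →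
          (∀ t ∈ I, HasDerivAt v (-(deriv φ (x t))) t) →
          ∀ t ∈ I,
            MvPolynomial.eval
              (fun i : Fin (m + 1) => iteratedDeriv (i : ℕ) (fun s => α (x s)) t) Q = 0)
      ↔ ∀ x y : ℂ,
          MvPolynomial.eval (fun i : Fin (m + 1) => A (i : ℕ) (x, y)) Q = 0 := by
  have hAn : ∀ n, ∀ p : ℂ × ℂ, AnalyticAt ℂ (A n) p :=
    A_analytic φ α hφ hα A hA0 hArec
  have hφ2 : AnalyticOnNhd ℂ φ Set.univ := fun z _ => hφ.analyticAt z
  have hφ' : Differentiable ℂ (deriv φ) := fun z => ((hφ2.deriv) z trivial).differentiableAt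
  constructor
  · -- (i) → (ii): solve the ODE with initial data (x₀, y₀)
    intro h x₀ y₀
    set F : ℂ × ℂ → ℂ × ℂ := fun p => (p.2, -(deriv φ p.1)) with hF
    have hFc : ContDiff ℝ 1 F := by
      apply ContDiff.prodMk
      · exact contDiff_snd
      · have h1 : ContDiff ℂ 1 (deriv φ) := hφ'.contDiff
        have h2 : ContDiff ℝ 1 (deriv φ) := h1.restrict_scalars ℝ
        exact (h2.comp contDiff_fst).neg
    obtain ⟨f, hf0, ε, hε, hf⟩ :=
      (hFc.contDiffAt (x := ((x₀, y₀) : ℂ × ℂ))).exists_forall_mem_closedBall_exists_eq_forall_mem_Ioo_hasDerivAt₀ (0 : ℝ)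
    set x : ℝ → ℂ := fun t => (f t).1 with hxdef
    set v : ℝ → ℂ := fun t => (f t).2 with hvdef
    have hx : ∀ t ∈ Ioo (0 - ε) (0 + ε), HasDerivAt x (v t) t := by
      intro t ht
      have := ((ContinuousLinearMap.fst ℝ ℂ ℂ).hasFDerivAt).comp_hasDerivAt t (hf t ht)
      exact this
    have hv : ∀ t ∈ Ioo (0 - ε) (0 + ε), HasDerivAt v (-(deriv φ (x t))) t := by
      intro t ht
      have := ((ContinuousLinearMap.snd ℝ ℂ ℂ).hasFDerivAt).comp_hasDerivAt t (hf t ht)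
      exact this
    have h0 : (0 : ℝ) ∈ Ioo (0 - ε) (0 + ε) := by constructor <;> linarith
    have := h (Ioo (0 - ε) (0 + ε)) isOpen_Ioo Set.ordConnected_Ioo x v hx hv 0 h0
    have hiter := A_iter φ α A hA0 hAn hArec (Ioo (0 - ε) (0 + ε)) isOpen_Ioo x v hx hv
    have hx0 : x 0 = x₀ := by rw [hxdef]; simp [hf0]
    have hv0 : v 0 = y₀ := by rw [hvdef]; simp [hf0]
    calc MvPolynomial.eval (fun i : Fin (m + 1) => A (i : ℕ) (x₀, y₀)) Q
        = MvPolynomial.eval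
            (fun i : Fin (m + 1) => iteratedDeriv (i : ℕ) (fun s => α (x s)) 0) Q := by
          have hfun : (fun i : Fin (m + 1) => A (i : ℕ) (x₀, y₀))
              = fun i : Fin (m + 1) => iteratedDeriv (i : ℕ) (fun s => α (x s)) 0 := by
            funext i
            rw [hiter (i : ℕ) 0 h0, hx0, hv0]
          rw [hfun]
      _ = 0 := this
  · -- (ii) → (i)
    intro h I hI _ x v hx hv t ht
    have hiter := A_iter φ α A hA0 hAn hArec I hI x v hx hv
    calc MvPolynomial.eval
          (fun i : Fin (m + 1) => iteratedDeriv (i : ℕ) (fun s => α (x s)) t) Q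
        = MvPolynomial.eval (fun i : Fin (m + 1) => A (i : ℕ) (x t, v t)) Q := by
          have hfun : (fun i : Fin (m + 1) => iteratedDeriv (i : ℕ) (fun s => α (x s)) t)
              = fun i : Fin (m + 1) => A (i : ℕ) (x t, v t) := by
            funext i
            exact hiter (i : ℕ) t ht
          rw [hfun]
      _ = 0 := h (x t) (v t)
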